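/- arXiv:2106.12629 — 5 statements merged into one kernel-verified Lean document; each statement's English description precedes it below -/
import Mathlib

section
/- Let $S = \{x \in \mathbb{R}^n : x^\top A_i x + 2 b_i^\top x + c_i < 0, \ i \in [m]\}$ and let $S^h = \{(x, t) \in \mathbb{R}^{n+1} : x^\top A_i x + 2 t\, b_i^\top x + c_i t^2 < 0, \ i \in [m]\}$ be its homogenization. Let $\alpha^\top x < \beta$ be a valid inequality for $\operatorname{conv}(S)$, i.e., $\alpha^\top x < \beta$ for all $x \in \operatorname{conv}(S)$. If $\operatorname{conv}(S) \neq \mathbb{R}^n$, then $\{(x,t) : \alpha^\top x = \beta t\} \cap S^h = \emptyset$. -/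
open scoped Matrix

open Filter in
private lemma quad_tendsto {a B C : ℝ} (ha : a < 0) :
    Tendsto (fun s : ℝ => a * s ^ 2 + B * s + C) atTop atBot := by
  have h1 : Tendsto (fun s : ℝ => a * s + B) atTop atBot :=
    (tendsto_id.const_mul_atTop_of_neg ha).atBot_add tendsto_const_nhds
  have h2 : Tendsto (fun s : ℝ => s * (a * s + B)) atTop atBot :=
    Filter.Tendsto.atTop_mul_atBot₀ tendsto_id h1
  have h3 : Tendsto (fun s : ℝ => s * (a * s + B) + C) atTop atBot :=
    h2.atBot_add tendsto_const_nhds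
  convert h3 using 2 with s
  ring

theorem stmt3 {n m : ℕ} (A : Fin m → Matrix (Fin n) (Fin n) ℝ)
    (hsymm : ∀ i, (A i).IsSymm) (b : Fin m → (Fin n → ℝ)) (c : Fin m → ℝ)
    (S : Set (Fin n → ℝ))
    (hS : S = {x | ∀ i, x ⬝ᵥ (A i *ᵥ x) + 2 * (b i ⬝ᵥ x) + c i < 0})
    (Sh : Set ((Fin n → ℝ) × ℝ))
    (hSh : Sh = {p | ∀ i, p.1 ⬝ᵥ (A i *ᵥ p.1) + 2 * p.2 * (b i ⬝ᵥ p.1) + c i * p.2 ^ 2 < 0})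
    (α : Fin n → ℝ) (β : ℝ)
    (hvalid : ∀ x ∈ convexHull ℝ S, α ⬝ᵥ x < β)
    (hnontriv : convexHull ℝ S ≠ Set.univ) :
    {p : (Fin n → ℝ) × ℝ | α ⬝ᵥ p.1 = β * p.2} ∩ Sh = ∅ := by
  subst hS hSh
  ext ⟨x, t⟩
  simp only [Set.mem_inter_iff, Set.mem_setOf_eq, Set.mem_empty_iff_false, iff_false,
    not_and]
  intro heq hmem
  rcases eq_or_ne t 0 with ht | ht
  · subst ht
    have hq : ∀ i, x ⬝ᵥ (A i *ᵥ x) < 0 := by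
      intro i
      have := hmem i
      simpa using this
    apply hnontriv
    ext z
    simp only [Set.mem_univ, iff_true]
    -- for any direction d with d ⬝ A d < 0, eventually z + s • d ∈ S
    have key : ∀ d : Fin n → ℝ, (∀ i, d ⬝ᵥ (A i *ᵥ d) < 0) →
        ∀ᶠ s : ℝ in Filter.atTop,
          (z + s • d) ∈ {x | ∀ i, x ⬝ᵥ (A i *ᵥ x) + 2 * (b i ⬝ᵥ x) + c i < 0} := by
      intro d hd
      simp only [Set.mem_setOf_eq]
      rw [Filter.eventually_all]
      intro i
      have hexp : ∀ s : ℝ,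
          (z + s • d) ⬝ᵥ (A i *ᵥ (z + s • d)) + 2 * (b i ⬝ᵥ (z + s • d)) + c i
          = (d ⬝ᵥ (A i *ᵥ d)) * s ^ 2
            + (z ⬝ᵥ (A i *ᵥ d) + d ⬝ᵥ (A i *ᵥ z) + 2 * (b i ⬝ᵥ d)) * s
            + (z ⬝ᵥ (A i *ᵥ z) + 2 * (b i ⬝ᵥ z) + c i) := by
        intro s
        simp only [Matrix.mulVec_add, Matrix.mulVec_smul, dotProduct_add, add_dotProduct,
          dotProduct_smul, smul_dotProduct, smul_eq_mul]
        ring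
      have := (quad_tendsto (a := d ⬝ᵥ (A i *ᵥ d))
        (B := z ⬝ᵥ (A i *ᵥ d) + d ⬝ᵥ (A i *ᵥ z) + 2 * (b i ⬝ᵥ d))
        (C := z ⬝ᵥ (A i *ᵥ z) + 2 * (b i ⬝ᵥ z) + c i) (hd i)).eventually
        (Filter.eventually_lt_atBot 0)
      filter_upwards [this] with s hs
      rw [hexp s]
      exact hs
    have hq' : ∀ i, (-x) ⬝ᵥ (A i *ᵥ (-x)) < 0 := by
      intro i
      have : (-x) ⬝ᵥ (A i *ᵥ (-x)) = x ⬝ᵥ (A i *ᵥ x) := by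
        simp only [Matrix.mulVec_neg, dotProduct_neg, neg_dotProduct, neg_neg]
      rw [this]; exact hq i
    obtain ⟨s, hs1, hs2⟩ := ((key x hq).and (key (-x) hq')).exists
    have h1 : z + s • x ∈ convexHull ℝ {x | ∀ i, x ⬝ᵥ (A i *ᵥ x) + 2 * (b i ⬝ᵥ x) + c i < 0} :=
      subset_convexHull ℝ _ hs1
    have h2 : z + s • (-x) ∈ convexHull ℝ {x | ∀ i, x ⬝ᵥ (A i *ᵥ x) + 2 * (b i ⬝ᵥ x) + c i < 0} :=
      subset_convexHull ℝ _ hs2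
    have hmid := (convex_convexHull ℝ _) h1 h2
      (by norm_num : (0:ℝ) ≤ 1/2) (by norm_num : (0:ℝ) ≤ 1/2) (by norm_num)
    have : (1/2 : ℝ) • (z + s • x) + (1/2 : ℝ) • (z + s • (-x)) = z := by
      module
    rwa [this] at hmid
  · -- t ≠ 0 : x/t ∈ S
    have hx : t⁻¹ • x ∈ {x | ∀ i, x ⬝ᵥ (A i *ᵥ x) + 2 * (b i ⬝ᵥ x) + c i < 0} := by
      intro i
      have hi := hmem i
      have ht2 : (0:ℝ) < t⁻¹ * t⁻¹ := by
        have := mul_self_pos.mpr (inv_ne_zero ht)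
        simpa using this
      have hexp : (t⁻¹ • x) ⬝ᵥ (A i *ᵥ (t⁻¹ • x)) + 2 * (b i ⬝ᵥ (t⁻¹ • x)) + c i
          = t⁻¹ * t⁻¹ * (x ⬝ᵥ (A i *ᵥ x) + 2 * t * (b i ⬝ᵥ x) + c i * t ^ 2) := by
        simp only [Matrix.mulVec_smul, dotProduct_smul, smul_dotProduct, smul_eq_mul]
        field_simp
      rw [hexp]
      exact mul_neg_of_pos_of_neg ht2 hi
    have hval := hvalid _ (subset_convexHull ℝ _ hx)
    rw [dotProduct_smul, smul_eq_mul, heq] at hval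
    have : t⁻¹ * (β * t) = β := by field_simp
    rw [this] at hval
    exact lt_irrefl β hval
end

section
/- There is no $\lambda = (\lambda_1, \lambda_2, \lambda_3, \lambda_4) \in \mathbb{R}^4$ with $\lambda \geq 0$ and $\lambda \neq 0$ such that $\lambda_1 A_1 + \lambda_2 A_2 + \lambda_3 A_3 + \lambda_4 A_4 \succ 0$ (positive definite), where $A_1 = \begin{bmatrix} 1 & 1.1 & 1.1 \\ 1.1 & 1 & 1.1 \\ 1.1 & 1.1 & 1 \end{bmatrix}$, $A_2 = \operatorname{diag}(-2.1, 1, 1)$, $A_3 = \operatorname{diag}(1, -2.1, 1)$, $A_4 = \operatorname{diag}(1, 1, -2.1)$. -/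
theorem stmt8 :
    ¬ ∃ l : Fin 4 → ℝ, (∀ i, 0 ≤ l i) ∧ l ≠ 0 ∧
      (l 0 • !![(1:ℝ), 1.1, 1.1; 1.1, 1, 1.1; 1.1, 1.1, 1] +
       l 1 • !![(-2.1:ℝ), 0, 0; 0, 1, 0; 0, 0, 1] +
       l 2 • !![(1:ℝ), 0, 0; 0, -2.1, 0; 0, 0, 1] +
       l 3 • !![(1:ℝ), 0, 0; 0, 1, 0; 0, 0, -2.1]).PosDef := by
  rintro ⟨l, hl, hne, hpd⟩
  have h1 := hpd.dotProduct_mulVec_pos (x := ![(1:ℝ), -1, 0]) (by intro h; simpa using congrFun h 0)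
  have h2 := hpd.dotProduct_mulVec_pos (x := ![(1:ℝ), 0, -1]) (by intro h; simpa using congrFun h 0)
  have h3 := hpd.dotProduct_mulVec_pos (x := ![(0:ℝ), 1, -1]) (by intro h; simpa using congrFun h 1)
  simp [dotProduct, Matrix.mulVec, Fin.sum_univ_succ, Matrix.smul_apply] at h1 h2 h3
  have g0 := hl 0
  have g1 := hl 1
  have g2 := hl 2
  have g3 := hl 3
  norm_num at h1 h2 h3
  linarith
end

section
/- Let $T = \{x \in \mathbb{R}^3 : x_1^2 + x_2^2 \leq 2, \ -x_1^2 - x_2^2 \leq -1, \ -x_1^2 + x_2^2 + x_3^2 + 6x_1 \leq 0\}$. Then every $x \in T$ satisfies $x_1 \leq \frac{1}{2}(3 - \sqrt{11})$; in particular $\sup\{x_1 : x \in T\} < 0$. -/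
theorem stmt11 :
    (∀ x1 x2 x3 : ℝ, x1 ^ 2 + x2 ^ 2 ≤ 2 → -x1 ^ 2 - x2 ^ 2 ≤ -1 →
      -x1 ^ 2 + x2 ^ 2 + x3 ^ 2 + 6 * x1 ≤ 0 →
      x1 ≤ (3 - Real.sqrt 11) / 2) ∧ (3 - Real.sqrt 11) / 2 < 0 := by
  have hs : Real.sqrt 11 ^ 2 = 11 := Real.sq_sqrt (by norm_num)
  have hs3 : (3 : ℝ) < Real.sqrt 11 := by
    nlinarith [Real.sqrt_nonneg 11]
  constructor
  · intro x1 x2 x3 h1 h2 h3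
    have hx3 : x3 ^ 2 ≥ 0 := sq_nonneg x3
    by_contra h
    push_neg at h
    nlinarith [sq_nonneg (2 * x1 - 3 + Real.sqrt 11), Real.sqrt_nonneg 11]
  · linarith
end

section
/- Let $S = \{x \in \mathbb{R}^2 : x_1^2 \leq 1, \ x_2^2 \leq 1, \ (x_1-1)^2 + (x_2-1)^2 \geq 1\}$. Then $\operatorname{conv}(S) = \{x \in \mathbb{R}^2 : x_1^2 \leq 1, \ x_2^2 \leq 1, \ x_1 + x_2 \leq 1\}$. -/
theorem stmt17 :
    convexHull ℝ {x : Fin 2 → ℝ |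
        (x 0) ^ 2 ≤ 1 ∧ (x 1) ^ 2 ≤ 1 ∧ 1 ≤ (x 0 - 1) ^ 2 + (x 1 - 1) ^ 2} =
      {x : Fin 2 → ℝ | (x 0) ^ 2 ≤ 1 ∧ (x 1) ^ 2 ≤ 1 ∧ x 0 + x 1 ≤ 1} := by
  set S : Set (Fin 2 → ℝ) := {x : Fin 2 → ℝ |
      (x 0) ^ 2 ≤ 1 ∧ (x 1) ^ 2 ≤ 1 ∧ 1 ≤ (x 0 - 1) ^ 2 + (x 1 - 1) ^ 2} with hS
  apply le_antisymm
  · apply convexHull_min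
    · rintro x ⟨h1, h2, h3⟩
      refine ⟨h1, h2, ?_⟩
      by_contra hlt
      push_neg at hlt
      have ha : x 0 ≤ 1 := by nlinarith
      have hb : x 1 ≤ 1 := by nlinarith
      nlinarith [mul_nonneg (sub_nonneg.2 ha) (sub_nonneg.2 hb)]
    · rintro x ⟨hx1, hx2, hx3⟩ y ⟨hy1, hy2, hy3⟩ a b ha hb hab
      have e1 : (0:ℝ) ≤ 1 - x 0 ^ 2 := by linarith
      have e2 : (0:ℝ) ≤ 1 - y 0 ^ 2 := by linarith
      have e3 : (0:ℝ) ≤ 1 - x 1 ^ 2 := by linarith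
      have e4 : (0:ℝ) ≤ 1 - y 1 ^ 2 := by linarith
      refine ⟨?_, ?_, ?_⟩ <;>
        simp only [Pi.add_apply, Pi.smul_apply, smul_eq_mul]
      · nlinarith [mul_nonneg (mul_nonneg ha hb) (sq_nonneg (x 0 - y 0)),
          mul_nonneg (mul_nonneg ha ha) e1, mul_nonneg (mul_nonneg hb hb) e2,
          mul_nonneg (mul_nonneg ha hb) e1, mul_nonneg (mul_nonneg ha hb) e2]
      · nlinarith [mul_nonneg (mul_nonneg ha hb) (sq_nonneg (x 1 - y 1)),
          mul_nonneg (mul_nonneg ha ha) e3, mul_nonneg (mul_nonneg hb hb) e4,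
          mul_nonneg (mul_nonneg ha hb) e3, mul_nonneg (mul_nonneg ha hb) e4]
      · nlinarith
  · rintro x ⟨h1, h2, h3⟩
    have hm1 : -1 ≤ x 0 := by nlinarith
    have hp1 : x 0 ≤ 1 := by nlinarith
    have hm2 : -1 ≤ x 1 := by nlinarith
    have hp2 : x 1 ≤ 1 := by nlinarith
    have hC : Convex ℝ (convexHull ℝ S) := convex_convexHull ℝ S
    have hL : (![(-1 : ℝ), x 1]) ∈ S := by
      constructor
      · norm_num
      constructor
      · simpa using h2
      · simp only [Matrix.cons_val_zero, Matrix.cons_val_one, Matrix.head_cons]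
        nlinarith [sq_nonneg (x 1 - 1)]
    have hLc : (![(-1 : ℝ), x 1]) ∈ convexHull ℝ S := subset_convexHull ℝ S hL
    rcases le_or_gt (x 1) 0 with hb | hb
    · -- R = (1, x 1) ∈ S
      have hR : (![(1 : ℝ), x 1]) ∈ S := by
        refine ⟨by norm_num, by simpa using h2, ?_⟩
        simp only [Matrix.cons_val_zero, Matrix.cons_val_one, Matrix.head_cons]
        nlinarith
      have hRc := subset_convexHull ℝ S hR
      have hseg := hC.segment_subset hLc hRc
      apply hseg
      refine ⟨(1 - x 0) / 2, (1 + x 0) / 2, by linarith, by linarith, by ring, ?_⟩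
      funext i
      fin_cases i <;>
        simp [Matrix.cons_val_zero, Matrix.cons_val_one, Matrix.head_cons] <;> ring
    · -- R = (1 - x 1, x 1) ∈ conv S, on segment from (1,0) to (0,1)
      have hP3 : (![(1 : ℝ), 0]) ∈ S := by
        refine ⟨by norm_num, by norm_num, by norm_num⟩
      have hP4 : (![(0 : ℝ), 1]) ∈ S := by
        refine ⟨by norm_num, by norm_num, by norm_num⟩
      have hRc : (![1 - x 1, x 1]) ∈ convexHull ℝ S := by
        have := hC.segment_subset (subset_convexHull ℝ S hP3) (subset_convexHull ℝ S hP4)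
        apply this
        refine ⟨1 - x 1, x 1, by linarith, by linarith, by ring, ?_⟩
        funext i
        fin_cases i <;>
          simp [Matrix.cons_val_zero, Matrix.cons_val_one, Matrix.head_cons] <;> ring
      have hseg := hC.segment_subset hLc hRc
      apply hseg
      have hden : (0 : ℝ) < 2 - x 1 := by linarith
      refine ⟨(1 - x 1 - x 0) / (2 - x 1), (1 + x 0) / (2 - x 1),
        div_nonneg (by linarith) hden.le, div_nonneg (by linarith) hden.le,
        by field_simp; ring, ?_⟩
      funext i
      fin_cases i <;>
        simp [Matrix.cons_val_zero, Matrix.cons_val_one, Matrix.head_cons] <;>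
        field_simp <;> ring
end

section
/- Let $\mathcal{P} = \{x \in \mathbb{R}^{n+1} : x^\top P x < 0\}$ be nonempty, where $P$ is a symmetric $(n+1)\times(n+1)$ matrix. If there exists a linear hyperplane $H = \{x : a^\top x = 0\}$ (with $a \neq 0$) such that $H \cap \mathcal{P} = \emptyset$, then $P$ has exactly one negative eigenvalue. -/
open scoped Matrix

theorem stmt19 {n : ℕ} (P : Matrix (Fin (n + 1)) (Fin (n + 1)) ℝ)
    (hP : P.IsHermitian)
    (hne : ∃ x : Fin (n + 1) → ℝ, x ⬝ᵥ (P *ᵥ x) < 0)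
    (a : Fin (n + 1) → ℝ) (ha : a ≠ 0)
    (hsep : ∀ x : Fin (n + 1) → ℝ, a ⬝ᵥ x = 0 → ¬ x ⬝ᵥ (P *ᵥ x) < 0) :
    (Finset.univ.filter fun i => hP.eigenvalues i < 0).card = 1 := by
  -- dot products of eigenvectors
  have hdot : ∀ i j, (⇑(hP.eigenvectorBasis i) : Fin (n+1) → ℝ) ⬝ᵥ ⇑(hP.eigenvectorBasis j)
      = if i = j then 1 else 0 := by
    intro i j
    have := hP.eigenvectorBasis.orthonormal
    rw [orthonormal_iff_ite] at this
    have h := this i j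
    rw [EuclideanSpace.inner_eq_star_dotProduct] at h
    simpa [star, WithLp.equiv, dotProduct_comm] using h
  refine le_antisymm ?_ ?_
  · rw [Finset.card_le_one]
    intro i hi j hj
    simp only [Finset.mem_filter] at hi hj
    by_contra hij
    set u : Fin (n+1) → ℝ := ⇑(hP.eigenvectorBasis i) with hu
    set v : Fin (n+1) → ℝ := ⇑(hP.eigenvectorBasis j) with hv
    set c : ℝ := a ⬝ᵥ v with hc
    set d : ℝ := -(a ⬝ᵥ u) with hd
    have hPu : P *ᵥ u = hP.eigenvalues i • u := hP.mulVec_eigenvectorBasis i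
    have hPv : P *ᵥ v = hP.eigenvalues j • v := hP.mulVec_eigenvectorBasis j
    have huu : u ⬝ᵥ u = 1 := by simpa using hdot i i
    have hvv : v ⬝ᵥ v = 1 := by simpa using hdot j j
    have huv : u ⬝ᵥ v = 0 := by simpa [hij] using hdot i j
    have hvu : v ⬝ᵥ u = 0 := by rw [dotProduct_comm]; exact huv
    by_cases hcd : c = 0 ∧ d = 0
    · -- then a ⬝ᵥ u = 0, and u itself is in the hyperplane with u⊤Pu = λᵢ < 0
      have h0 : a ⬝ᵥ u = 0 := by have := hcd.2; rw [hd] at this; linarith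
      exact hsep u h0 (by rw [hPu, dotProduct_smul, huu, smul_eq_mul, mul_one]; exact hi.2)
    · set x : Fin (n+1) → ℝ := c • u + d • v with hx
      have hax : a ⬝ᵥ x = 0 := by
        simp [hx, dotProduct_add, dotProduct_smul, hc, hd, dotProduct_comm a u,
          dotProduct_comm a v]
        ring
      have hPx : P *ᵥ x = (c * hP.eigenvalues i) • u + (d * hP.eigenvalues j) • v := by
        rw [hx, Matrix.mulVec_add, Matrix.mulVec_smul, Matrix.mulVec_smul, hPu, hPv,
          smul_smul, smul_smul]
      have hxPx : x ⬝ᵥ (P *ᵥ x) = c^2 * hP.eigenvalues i + d^2 * hP.eigenvalues j := by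
        rw [hPx, hx]
        simp [add_dotProduct, dotProduct_add, smul_dotProduct,
          dotProduct_smul, huu, hvv, huv, hvu]
        ring
      have hneg : x ⬝ᵥ (P *ᵥ x) < 0 := by
        rw [hxPx]
        rcases not_and_or.mp hcd with h | h
        · have hc2 : 0 < c^2 := by positivity
          nlinarith [sq_nonneg d, hi.2, hj.2]
        · have hd2 : 0 < d^2 := by positivity
          nlinarith [sq_nonneg c, hi.2, hj.2]
      exact hsep x hax hneg
  · obtain ⟨x, hx⟩ := hne
    rw [Finset.one_le_card]
    by_contra h
    rw [Finset.not_nonempty_iff_eq_empty, Finset.filter_eq_empty_iff] at h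
    have hpsd : P.PosSemidef :=
      hP.posSemidef_iff_eigenvalues_nonneg.mpr fun i => le_of_not_gt (h (Finset.mem_univ i))
    have h2 := hpsd.re_dotProduct_nonneg x
    simp only [RCLike.re_to_real, star_trivial] at h2
    linarith
end
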